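/- arXiv:2311.03178 — 2 statements merged into one kernel-verified Lean document; each statement's English description precedes it below -/
import Mathlib

section
/- Let φ: ℝ → ℝ with φ(x) = 1 + cos(2πx) for |x| ≤ 1/2 and φ(x) = 0 otherwise, and for τ > 0 let ψ_τ: ℝ → ℝ be defined by ψ_τ(x) = (1+τ)^{−1/2}[4π²(1+τ)(φ*φ)(x/√(1+τ)) + (φ*φ)''(x/√(1+τ))], where * denotes convolution. Then the Fourier transform of ψ_τ satisfies ψ̂_τ(v) = 4π²(1+τ)(1 − v²)·(φ̂(√(1+τ)·v))² for all v ∈ ℝ. -/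
open scoped FourierTransform Real

/-- The raised-cosine bump `φ(x) = 1 + cos(2πx)` on `[-1/2, 1/2]`, zero elsewhere. -/
noncomputable def raisedCos : ℝ → ℝ :=
  fun x => if |x| ≤ 1/2 then 1 + Real.cos (2 * π * x) else 0

noncomputable def clampHalf (x : ℝ) : ℝ := min (max x (-(1/2))) (1/2)

lemma cos_two_pi_half : Real.cos (2 * π * (1/2)) = -1 := by
  norm_num [show (2:ℝ) * π * (1/2) = π by ring, Real.cos_pi]

lemma raisedCos_eq_clamp (x : ℝ) :
    raisedCos x = 1 + Real.cos (2 * π * clampHalf x) := by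
  unfold raisedCos clampHalf
  rcases le_or_gt (|x|) (1/2) with h | h
  · rw [if_pos h]
    rw [abs_le] at h
    rw [max_eq_left h.1, min_eq_left h.2]
  · rw [if_neg (not_le.2 h)]
    rcases lt_abs.mp h with hx | hx
    · rw [max_eq_left (by linarith), min_eq_right hx.le, cos_two_pi_half]; ring
    · rw [max_eq_right (by linarith : x ≤ -(1/2)), min_eq_left (by norm_num)]
      rw [mul_neg, Real.cos_neg, cos_two_pi_half]; ring

lemma continuous_clampHalf : Continuous clampHalf := by
  unfold clampHalf; fun_prop

lemma continuous_raisedCos : Continuous raisedCos := by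
  have : raisedCos = fun x => 1 + Real.cos (2 * π * clampHalf x) :=
    funext raisedCos_eq_clamp
  rw [this]
  exact continuous_const.add (Real.continuous_cos.comp (continuous_const.mul continuous_clampHalf))

lemma raisedCos_support (x : ℝ) (hx : x ∉ Set.Icc (-(1/2):ℝ) (1/2)) : raisedCos x = 0 := by
  unfold raisedCos
  rw [if_neg]
  simp only [Set.mem_Icc, not_and_or, not_le] at hx
  rw [abs_le]
  rcases hx with h | h <;> intro hc <;> [exact absurd hc.1 (not_le.2 h); exact absurd hc.2 (not_le.2 h)]

lemma hasCompactSupport_raisedCos : HasCompactSupport raisedCos :=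
  HasCompactSupport.intro isCompact_Icc raisedCos_support

noncomputable def raisedCosDeriv (x : ℝ) : ℝ := -(2*π) * Real.sin (2*π*clampHalf x)

lemma continuous_raisedCosDeriv : Continuous raisedCosDeriv :=
  continuous_const.mul (Real.continuous_sin.comp (continuous_const.mul continuous_clampHalf))

lemma sin_two_pi_half : Real.sin (2 * π * (1/2)) = 0 := by
  norm_num [show (2:ℝ) * π * (1/2) = π by ring, Real.sin_pi]

lemma raisedCos_nonneg (x : ℝ) : 0 ≤ raisedCos x := by
  unfold raisedCos
  split
  · nlinarith [Real.neg_one_le_cos (2*π*x)]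
  · exact le_refl 0

lemma raisedCos_eq_sq (x : ℝ) (h : |x| ≤ 1/2) :
    raisedCos x = 2 * Real.cos (π * x) ^ 2 := by
  unfold raisedCos
  rw [if_pos h, Real.cos_sq]
  ring_nf

lemma raisedCos_le_right (x : ℝ) : raisedCos x ≤ 2 * π^2 * (x - 1/2)^2 := by
  rcases le_or_gt (|x|) (1/2) with h | h
  · rw [raisedCos_eq_sq x h, ← Real.sin_pi_div_two_sub (π * x)]
    have := Real.sin_sq_le_sq (x := π/2 - π * x)
    nlinarith [this]
  · rw [raisedCos_support x (by rw [Set.mem_Icc, ← abs_le] at *; exact fun hc => absurd hc (not_le.2 h))]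
    positivity

lemma raisedCos_le_left (x : ℝ) : raisedCos x ≤ 2 * π^2 * (x + 1/2)^2 := by
  rcases le_or_gt (|x|) (1/2) with h | h
  · rw [raisedCos_eq_sq x h, ← Real.sin_add_pi_div_two (π * x)]
    have := Real.sin_sq_le_sq (x := π * x + π/2)
    nlinarith [this]
  · rw [raisedCos_support x (by rw [Set.mem_Icc, ← abs_le] at *; exact fun hc => absurd hc (not_le.2 h))]
    positivity

lemma sq_littleO (x : ℝ) : (fun y => (y - x)^2) =o[nhds x] fun y => y - x := by
  have h1 : Filter.Tendsto (fun y => y - x) (nhds x) (nhds 0) := by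
    have := ((continuous_id.sub continuous_const).tendsto x : Filter.Tendsto (fun y => y - x) (nhds x) (nhds (x - x)))
    rw [show ((id - fun _ : ℝ => x : ℝ → ℝ) x) = 0 by simp] at this; exact this
  have h2 := (Asymptotics.isLittleO_one_iff ℝ).2 h1
  have h3 := h2.mul_isBigO (Asymptotics.isBigO_refl (fun y => y - x) (nhds x))
  simpa [pow_two] using h3

lemma hasDerivAt_raisedCos_half : HasDerivAt raisedCos 0 (1/2 : ℝ) := by
  rw [hasDerivAt_iff_isLittleO]
  have h0 : raisedCos (1/2) = 0 := by
    unfold raisedCos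
    rw [if_pos (by simp [abs_of_nonneg]), cos_two_pi_half]; ring
  simp only [h0, smul_zero, sub_zero]
  have hO : (fun y => raisedCos y) =O[nhds (1/2:ℝ)] fun y => (y - 1/2)^2 := by
    apply Asymptotics.IsBigO.of_bound (2*π^2)
    filter_upwards with y
    rw [Real.norm_eq_abs, Real.norm_eq_abs, abs_of_nonneg (raisedCos_nonneg y),
      abs_of_nonneg (sq_nonneg _)]
    exact raisedCos_le_right y
  exact hO.trans_isLittleO (sq_littleO (1/2))

lemma hasDerivAt_raisedCos_neg_half : HasDerivAt raisedCos 0 (-(1/2) : ℝ) := by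
  rw [hasDerivAt_iff_isLittleO]
  have h0 : raisedCos (-(1/2)) = 0 := by
    unfold raisedCos
    rw [if_pos (by simp [abs_of_nonneg]), mul_neg, Real.cos_neg, cos_two_pi_half]; ring
  simp only [h0, smul_zero, sub_zero]
  have hO : (fun y => raisedCos y) =O[nhds (-(1/2):ℝ)] fun y => (y - -(1/2))^2 := by
    apply Asymptotics.IsBigO.of_bound (2*π^2)
    filter_upwards with y
    rw [Real.norm_eq_abs, Real.norm_eq_abs, abs_of_nonneg (raisedCos_nonneg y),
      abs_of_nonneg (sq_nonneg _)]
    have := raisedCos_le_left y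
    simpa [sub_neg_eq_add] using this
  exact hO.trans_isLittleO (sq_littleO (-(1/2)))

lemma hasDerivAt_raisedCos (x : ℝ) : HasDerivAt raisedCos (raisedCosDeriv x) x := by
  rcases lt_trichotomy (|x|) (1/2) with h | h | h
  · -- interior
    have hx := abs_lt.mp h
    have hd : HasDerivAt (fun y : ℝ => 1 + Real.cos (2 * π * y))
        (-Real.sin (2*π*x) * (2*π)) x := by
      have h1 : HasDerivAt (fun y : ℝ => 2 * π * y) (2*π) x := by
        simpa using (hasDerivAt_id x).const_mul (2*π)
      simpa using ((Real.hasDerivAt_cos (2*π*x)).comp x h1).const_add 1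
    have heq : raisedCos =ᶠ[nhds x] fun y : ℝ => 1 + Real.cos (2 * π * y) := by
      have hopen : IsOpen {y : ℝ | |y| < 1/2} := isOpen_lt (continuous_abs) continuous_const
      filter_upwards [hopen.mem_nhds h] with y hy
      unfold raisedCos; rw [if_pos (le_of_lt hy)]
    have := hd.congr_of_eventuallyEq heq
    have hc : clampHalf x = x := by
      unfold clampHalf; rw [max_eq_left hx.1.le, min_eq_left hx.2.le]
    unfold raisedCosDeriv
    rw [hc]
    rw [show -(2 * π) * Real.sin (2 * π * x) = -Real.sin (2 * π * x) * (2 * π) by ring]; exact this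
  · -- boundary
    have hd0 : raisedCosDeriv x = 0 := by
      unfold raisedCosDeriv
      rcases abs_eq (by norm_num : (0:ℝ) ≤ 1/2) |>.mp h with h1 | h1
      · subst h1; unfold clampHalf
        rw [max_eq_left (by norm_num), min_eq_left (le_refl _), sin_two_pi_half]; ring
      · subst h1; unfold clampHalf
        rw [max_eq_right (le_refl _), min_eq_left (by norm_num), mul_neg, Real.sin_neg,
          sin_two_pi_half]; ring
    rw [hd0]
    rcases abs_eq (by norm_num : (0:ℝ) ≤ 1/2) |>.mp h with h1 | h1
    · subst h1; exact hasDerivAt_raisedCos_half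
    · subst h1; exact hasDerivAt_raisedCos_neg_half
  · -- exterior
    have heq : raisedCos =ᶠ[nhds x] fun _ : ℝ => (0:ℝ) := by
      have hopen : IsOpen {y : ℝ | 1/2 < |y|} := isOpen_lt continuous_const continuous_abs
      filter_upwards [hopen.mem_nhds h] with y hy
      unfold raisedCos; rw [if_neg (not_le.2 hy)]
    have hd := (hasDerivAt_const x (0:ℝ)).congr_of_eventuallyEq heq
    have hd0 : raisedCosDeriv x = 0 := by
      unfold raisedCosDeriv clampHalf
      rcases lt_abs.mp h with hx | hx
      · rw [max_eq_left (by linarith), min_eq_right hx.le, sin_two_pi_half]; ring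
      · rw [max_eq_right (by linarith : x ≤ -(1/2)), min_eq_left (by norm_num), mul_neg,
          Real.sin_neg, sin_two_pi_half]; ring
    rw [hd0]; exact hd

lemma deriv_raisedCos : deriv raisedCos = raisedCosDeriv :=
  funext fun x => (hasDerivAt_raisedCos x).deriv

lemma contDiff_raisedCos : ContDiff ℝ 1 raisedCos := by
  rw [contDiff_one_iff_deriv]
  exact ⟨fun x => (hasDerivAt_raisedCos x).differentiableAt,
    deriv_raisedCos ▸ continuous_raisedCosDeriv⟩

lemma raisedCosDeriv_support (x : ℝ) (hx : x ∉ Set.Icc (-(1/2):ℝ) (1/2)) :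
    raisedCosDeriv x = 0 := by
  unfold raisedCosDeriv clampHalf
  simp only [Set.mem_Icc, not_and_or, not_le] at hx
  rcases hx with h | h
  · rw [max_eq_right h.le, min_eq_left (by norm_num), mul_neg, Real.sin_neg, sin_two_pi_half]
    ring
  · rw [max_eq_left (by linarith), min_eq_right h.le, sin_two_pi_half]; ring

lemma hasCompactSupport_raisedCosDeriv : HasCompactSupport raisedCosDeriv :=
  HasCompactSupport.intro isCompact_Icc raisedCosDeriv_support

lemma integrable_raisedCos : MeasureTheory.Integrable raisedCos :=
  continuous_raisedCos.integrable_of_hasCompactSupport hasCompactSupport_raisedCos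

lemma integrable_raisedCosDeriv : MeasureTheory.Integrable raisedCosDeriv :=
  continuous_raisedCosDeriv.integrable_of_hasCompactSupport hasCompactSupport_raisedCosDeriv

open MeasureTheory in
lemma fourier_conv_eq (f g : ℝ → ℝ) (hfc : Continuous f) (hfs : HasCompactSupport f)
    (hgc : Continuous g) (hgs : HasCompactSupport g) (v : ℝ) :
    𝓕 (fun x : ℝ => ((convolution f g (ContinuousLinearMap.lsmul ℝ ℝ) volume) x : ℂ)) v
      = 𝓕 (fun x : ℝ => (f x : ℂ)) v * 𝓕 (fun x : ℝ => (g x : ℂ)) v := by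
  set E : ℝ → ℂ := fun x => Complex.exp ((-2 * π * x * v : ℝ) * Complex.I) with hE
  have hEmul : ∀ x t : ℝ, E t * E (x - t) = E x := by
    intro x t
    rw [hE, ← Complex.exp_add]
    congr 1
    push_cast
    ring
  set F : ℝ → ℂ := fun x => E x * (f x : ℂ) with hF
  set G : ℝ → ℂ := fun x => E x * (g x : ℂ) with hG
  have hEc : Continuous E := by
    apply Complex.continuous_exp.comp
    fun_prop
  have hFc : Continuous F := hEc.mul (Complex.continuous_ofReal.comp hfc)
  have hGc : Continuous G := hEc.mul (Complex.continuous_ofReal.comp hgc)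
  have hFs : HasCompactSupport F :=
    HasCompactSupport.mul_left (hfs.comp_left (g := Complex.ofReal) rfl)
  have hGs : HasCompactSupport G :=
    HasCompactSupport.mul_left (hgs.comp_left (g := Complex.ofReal) rfl)
  have hFi : Integrable F := hFc.integrable_of_hasCompactSupport hFs
  have hGi : Integrable G := hGc.integrable_of_hasCompactSupport hGs
  have key : ∀ x : ℝ, E x * ((convolution f g (ContinuousLinearMap.lsmul ℝ ℝ) volume) x : ℂ)
      = (convolution F G (ContinuousLinearMap.mul ℂ ℂ) volume) x := by
    intro x
    rw [convolution_mul]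
    have h1 : ∀ t : ℝ, F t * G (x - t) = E x * ((f t * g (x - t) : ℝ) : ℂ) := by
      intro t
      rw [hF, hG]
      push_cast
      rw [← hEmul x t]
      ring
    simp_rw [h1]
    rw [MeasureTheory.integral_const_mul]
    congr 1
    rw [MeasureTheory.convolution_lsmul]
    simp_rw [smul_eq_mul]
    exact (integral_ofReal (𝕜 := ℂ)).symm
  calc 𝓕 (fun x : ℝ => ((convolution f g (ContinuousLinearMap.lsmul ℝ ℝ) volume) x : ℂ)) v
      = ∫ x : ℝ, E x * ((convolution f g (ContinuousLinearMap.lsmul ℝ ℝ) volume) x : ℂ) := by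
        rw [Real.fourier_real_eq_integral_exp_smul]
        simp_rw [smul_eq_mul]
        rfl
    _ = ∫ x : ℝ, (convolution F G (ContinuousLinearMap.mul ℂ ℂ) volume) x := by
        simp_rw [key]
    _ = (∫ x : ℝ, F x) * ∫ x : ℝ, G x := by
        rw [integral_convolution (ContinuousLinearMap.mul ℂ ℂ) hFi hGi]
        simp
    _ = 𝓕 (fun x : ℝ => (f x : ℂ)) v * 𝓕 (fun x : ℝ => (g x : ℂ)) v := by
        rw [Real.fourier_real_eq_integral_exp_smul,
          Real.fourier_real_eq_integral_exp_smul]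
        simp_rw [smul_eq_mul]
        rfl

/-- The autocorrelation `φ * φ` (convolution over ℝ with respect to Lebesgue measure). -/
noncomputable def raisedCosConv : ℝ → ℝ :=
  MeasureTheory.convolution raisedCos raisedCos (ContinuousLinearMap.lsmul ℝ ℝ)
    MeasureTheory.volume

open MeasureTheory in
noncomputable def raisedCosConv' : ℝ → ℝ :=
  convolution raisedCos raisedCosDeriv (ContinuousLinearMap.lsmul ℝ ℝ) volume

open MeasureTheory in
noncomputable def raisedCosConv'' : ℝ → ℝ :=
  convolution raisedCosDeriv raisedCosDeriv (ContinuousLinearMap.lsmul ℝ ℝ) volume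

open MeasureTheory in
lemma hasDerivAt_raisedCosConv (x : ℝ) :
    HasDerivAt raisedCosConv (raisedCosConv' x) x := by
  have := HasCompactSupport.hasDerivAt_convolution_right (μ := volume) (ContinuousLinearMap.lsmul ℝ ℝ)
    (continuous_raisedCos.locallyIntegrable) hasCompactSupport_raisedCos contDiff_raisedCos x
  rw [deriv_raisedCos] at this
  exact this

open MeasureTheory in
lemma hasDerivAt_raisedCosConv' (x : ℝ) :
    HasDerivAt raisedCosConv' (raisedCosConv'' x) x := by
  have := HasCompactSupport.hasDerivAt_convolution_left (μ := volume) (ContinuousLinearMap.lsmul ℝ ℝ)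
    hasCompactSupport_raisedCos contDiff_raisedCos
    (continuous_raisedCosDeriv.locallyIntegrable) x
  rw [deriv_raisedCos] at this
  exact this

lemma deriv_raisedCosConv : deriv raisedCosConv = raisedCosConv' :=
  funext fun x => (hasDerivAt_raisedCosConv x).deriv

lemma deriv2_raisedCosConv : deriv (deriv raisedCosConv) = raisedCosConv'' := by
  rw [deriv_raisedCosConv]
  exact funext fun x => (hasDerivAt_raisedCosConv' x).deriv

open MeasureTheory in
lemma continuous_raisedCosConv : Continuous raisedCosConv :=
  HasCompactSupport.continuous_convolution_right _ hasCompactSupport_raisedCos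
    continuous_raisedCos.locallyIntegrable continuous_raisedCos

open MeasureTheory in
lemma continuous_raisedCosConv' : Continuous raisedCosConv' :=
  HasCompactSupport.continuous_convolution_right _ hasCompactSupport_raisedCosDeriv
    continuous_raisedCos.locallyIntegrable continuous_raisedCosDeriv

open MeasureTheory in
lemma continuous_raisedCosConv'' : Continuous raisedCosConv'' :=
  HasCompactSupport.continuous_convolution_right _ hasCompactSupport_raisedCosDeriv
    continuous_raisedCosDeriv.locallyIntegrable continuous_raisedCosDeriv

open MeasureTheory in
lemma hasCompactSupport_raisedCosConv : HasCompactSupport raisedCosConv :=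
  hasCompactSupport_raisedCos.convolution _ hasCompactSupport_raisedCos

open MeasureTheory in
lemma hasCompactSupport_raisedCosConv' : HasCompactSupport raisedCosConv' :=
  hasCompactSupport_raisedCos.convolution _ hasCompactSupport_raisedCosDeriv

open MeasureTheory in
lemma hasCompactSupport_raisedCosConv'' : HasCompactSupport raisedCosConv'' :=
  hasCompactSupport_raisedCosDeriv.convolution _ hasCompactSupport_raisedCosDeriv

lemma integrable_raisedCosConv : MeasureTheory.Integrable raisedCosConv :=
  continuous_raisedCosConv.integrable_of_hasCompactSupport hasCompactSupport_raisedCosConv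

lemma integrable_raisedCosConv' : MeasureTheory.Integrable raisedCosConv' :=
  continuous_raisedCosConv'.integrable_of_hasCompactSupport hasCompactSupport_raisedCosConv'

lemma integrable_raisedCosConv'' : MeasureTheory.Integrable raisedCosConv'' :=
  continuous_raisedCosConv''.integrable_of_hasCompactSupport hasCompactSupport_raisedCosConv''

open MeasureTheory in
lemma fourier_const_mul (c : ℂ) (f : ℝ → ℂ) (w : ℝ) :
    𝓕 (fun x => c * f x) w = c * 𝓕 f w := by
  rw [Real.fourier_real_eq_integral_exp_smul,
    Real.fourier_real_eq_integral_exp_smul]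
  simp_rw [smul_eq_mul, ← MeasureTheory.integral_const_mul]
  congr 1; funext x; ring

open MeasureTheory in
lemma fourier_add2 (f g : ℝ → ℂ) (hf : Integrable f) (hg : Integrable g) (w : ℝ) :
    𝓕 (fun x => f x + g x) w = 𝓕 f w + 𝓕 g w := by
  rw [Real.fourier_real_eq_integral_exp_smul,
    Real.fourier_real_eq_integral_exp_smul,
    Real.fourier_real_eq_integral_exp_smul]
  simp_rw [smul_add]
  apply MeasureTheory.integral_add
  · apply hf.bdd_mul (c := 1)
    · exact (Complex.continuous_exp.comp (by fun_prop)).aestronglyMeasurable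
    · exact Filter.Eventually.of_forall fun x => by rw [Complex.norm_exp_ofReal_mul_I]
  · apply hg.bdd_mul (c := 1)
    · exact (Complex.continuous_exp.comp (by fun_prop)).aestronglyMeasurable
    · exact Filter.Eventually.of_forall fun x => by rw [Complex.norm_exp_ofReal_mul_I]

open MeasureTheory in
lemma fourier_comp_div (h : ℝ → ℂ) (s : ℝ) (hs : 0 < s) (v : ℝ) :
    𝓕 (fun x => h (x / s)) v = (s : ℂ) * 𝓕 h (s * v) := by
  rw [Real.fourier_real_eq_integral_exp_smul,
    Real.fourier_real_eq_integral_exp_smul]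
  have key : ∀ x : ℝ, Complex.exp ((-2 * π * x * v : ℝ) * Complex.I) • h (x / s)
      = (fun y : ℝ => Complex.exp ((-2 * π * (s * y) * v : ℝ) * Complex.I) • h y) (x / s) := by
    intro x
    simp only
    rw [show s * (x / s) = x by field_simp]
  simp_rw [key]
  rw [MeasureTheory.Measure.integral_comp_div
    (fun y : ℝ => Complex.exp ((-2 * π * (s * y) * v : ℝ) * Complex.I) • h y) s,
    abs_of_pos hs]
  rw [Complex.real_smul]
  congr 1
  apply MeasureTheory.integral_congr_ae
  filter_upwards with y
  congr 2
  push_cast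
  ring

lemma deriv_GcEq : deriv (fun x => (raisedCosConv x : ℂ)) = fun x => (raisedCosConv' x : ℂ) :=
  funext fun x => ((hasDerivAt_raisedCosConv x).ofReal_comp).deriv

lemma deriv_G'cEq : deriv (fun x => (raisedCosConv' x : ℂ)) = fun x => (raisedCosConv'' x : ℂ) :=
  funext fun x => ((hasDerivAt_raisedCosConv' x).ofReal_comp).deriv

lemma fourier_G'c (w : ℝ) :
    𝓕 (fun x => (raisedCosConv' x : ℂ)) w
      = (2 * π * Complex.I * w) * 𝓕 (fun x => (raisedCosConv x : ℂ)) w := by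
  have hd : MeasureTheory.Integrable (deriv fun x : ℝ => (raisedCosConv x : ℂ)) := by
    rw [deriv_GcEq]; exact integrable_raisedCosConv'.ofReal
  have h2 := Real.fourier_deriv integrable_raisedCosConv.ofReal
    (fun x => ((hasDerivAt_raisedCosConv x).ofReal_comp).differentiableAt) hd
  have h1 : 𝓕 (fun x => (raisedCosConv' x : ℂ)) w
      = 𝓕 (deriv fun x => (raisedCosConv x : ℂ)) w := by rw [deriv_GcEq]
  refine h1.trans ((congrFun h2 w).trans ?_)
  exact smul_eq_mul _ _

lemma fourier_G''c (w : ℝ) :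
    𝓕 (fun x => (raisedCosConv'' x : ℂ)) w
      = (2 * π * Complex.I * w)^2 * 𝓕 (fun x => (raisedCosConv x : ℂ)) w := by
  have hd : MeasureTheory.Integrable (deriv fun x : ℝ => (raisedCosConv' x : ℂ)) := by
    rw [deriv_G'cEq]; exact integrable_raisedCosConv''.ofReal
  have h2 := Real.fourier_deriv integrable_raisedCosConv'.ofReal
    (fun x => ((hasDerivAt_raisedCosConv' x).ofReal_comp).differentiableAt) hd
  have h1 : 𝓕 (fun x => (raisedCosConv'' x : ℂ)) w
      = 𝓕 (deriv fun x => (raisedCosConv' x : ℂ)) w := by rw [deriv_G'cEq]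
  refine h1.trans ((congrFun h2 w).trans ?_)
  refine ((congrArg (fun z : ℂ => (2 * (π:ℂ) * Complex.I * (w:ℂ)) • z) (fourier_G'c w)).trans ?_)
  rw [smul_eq_mul]
  ring

lemma fourier_Gc (w : ℝ) :
    𝓕 (fun x => (raisedCosConv x : ℂ)) w = (𝓕 (fun x : ℝ => (raisedCos x : ℂ)) w) ^ 2 := by
  rw [show raisedCosConv = MeasureTheory.convolution raisedCos raisedCos
      (ContinuousLinearMap.lsmul ℝ ℝ) MeasureTheory.volume from rfl]
  rw [fourier_conv_eq raisedCos raisedCos continuous_raisedCos hasCompactSupport_raisedCos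
    continuous_raisedCos hasCompactSupport_raisedCos w]
  ring

/-- The univariate admissible function
`ψ_τ(x) = (1+τ)^{−1/2} [4π²(1+τ)(φ*φ)(x/√(1+τ)) + (φ*φ)''(x/√(1+τ))]`. -/
noncomputable def psiAdm (τ : ℝ) : ℝ → ℝ := fun x =>
  (Real.sqrt (1 + τ))⁻¹ *
    (4 * π ^ 2 * (1 + τ) * raisedCosConv (x / Real.sqrt (1 + τ)) +
      deriv (deriv raisedCosConv) (x / Real.sqrt (1 + τ)))

/-- For `τ > 0`, the Fourier transform of `ψ_τ` is
`ψ̂_τ(v) = 4π²(1+τ)(1 − v²)(φ̂(√(1+τ)·v))²`. -/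
theorem fourier_psiAdm (τ : ℝ) (hτ : 0 < τ) (v : ℝ) :
    𝓕 (fun x : ℝ => (psiAdm τ x : ℂ)) v
      = ((4 * π ^ 2 * (1 + τ) * (1 - v ^ 2) : ℝ) : ℂ) *
          (𝓕 (fun x : ℝ => (raisedCos x : ℂ)) (Real.sqrt (1 + τ) * v)) ^ 2 := by
  set s := Real.sqrt (1 + τ) with hs
  have hs0 : 0 < s := Real.sqrt_pos.2 (by linarith)
  have hs2 : s ^ 2 = 1 + τ := Real.sq_sqrt (by linarith)
  have hpsi : (fun x : ℝ => (psiAdm τ x : ℂ))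
      = fun x => ((s⁻¹ : ℝ) : ℂ) *
          ((fun y : ℝ => ((4 * π ^ 2 * (1 + τ) * raisedCosConv y + raisedCosConv'' y : ℝ) : ℂ))
            (x / s)) := by
    funext x
    show ((psiAdm τ x : ℝ) : ℂ) = _
    unfold psiAdm
    rw [deriv2_raisedCosConv, ← hs]
    push_cast
    ring
  rw [hpsi, fourier_const_mul,
    fourier_comp_div
      (fun y : ℝ => ((4 * π ^ 2 * (1 + τ) * raisedCosConv y + raisedCosConv'' y : ℝ) : ℂ))
      s hs0 v]
  have hHc : (fun y : ℝ => ((4 * π ^ 2 * (1 + τ) * raisedCosConv y + raisedCosConv'' y : ℝ) : ℂ))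
      = fun y : ℝ => ((4 * π ^ 2 * (1 + τ) : ℝ) : ℂ) * ((raisedCosConv y : ℝ) : ℂ)
          + ((raisedCosConv'' y : ℝ) : ℂ) := by
    funext y; push_cast; ring
  rw [hHc, fourier_add2
      (fun y : ℝ => ((4 * π ^ 2 * (1 + τ) : ℝ) : ℂ) * ((raisedCosConv y : ℝ) : ℂ))
      (fun y : ℝ => ((raisedCosConv'' y : ℝ) : ℂ))
      (by exact integrable_raisedCosConv.ofReal.const_mul _)
      (by exact integrable_raisedCosConv''.ofReal) (s * v),
    fourier_const_mul, fourier_G''c, fourier_Gc]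
  have hsC : ((s : ℝ) : ℂ) ^ 2 = 1 + (τ : ℂ) := by
    rw [← Complex.ofReal_pow, hs2]; push_cast; ring
  have hsne : ((s : ℝ) : ℂ) ≠ 0 := Complex.ofReal_ne_zero.2 hs0.ne'
  have hsinv : ((s : ℝ) : ℂ)⁻¹ * ((s : ℝ) : ℂ) = 1 := inv_mul_cancel₀ hsne
  set P := 𝓕 (fun x : ℝ => ((raisedCos x : ℝ) : ℂ)) (s * v) with hP
  push_cast
  linear_combination (4*(π:ℂ)^2*(1+(τ:ℂ)) + 4*(π:ℂ)^2*Complex.I^2*((s:ℝ):ℂ)^2*(v:ℂ)^2) * P^2 * hsinv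
    + 4*(π:ℂ)^2*((s:ℝ):ℂ)^2*(v:ℂ)^2*P^2 * Complex.I_sq
    - 4*(π:ℂ)^2*(v:ℂ)^2*P^2 * hsC
end

section
/- There is an absolute constant c > 0 such that for every τ > 0 and every x ∈ ℝ with |x| ≤ √(1+τ) one has ψ_τ(0) − ψ_τ(x) ≥ c·τ·(1+τ)^{−3/2}·x², where ψ_τ(x) = (1+τ)^{−1/2}[4π²(1+τ)(φ*φ)(x/√(1+τ)) + (φ*φ)''(x/√(1+τ))] and φ: ℝ → ℝ with φ(x) = 1 + cos(2πx) for |x| ≤ 1/2 and φ(x) = 0 otherwise. In particular 0 is the global maximum of ψ_τ. -/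
open scoped FourierTransform Real

noncomputable def g1 (x : ℝ) : ℝ :=
  (1 - x) * (1 + Real.cos (2 * π * x) / 2) + 3 / (4 * π) * Real.sin (2 * π * x)

noncomputable def rcAux (t : ℝ) : ℝ := 1 + Real.cos (2 * π * t)

noncomputable def Pant (x t : ℝ) : ℝ :=
  t + Real.sin (2 * π * t) / (2 * π) - Real.sin (2 * π * (x - t)) / (2 * π)
    + t * Real.cos (2 * π * x) / 2 + Real.sin (2 * π * (2 * t - x)) / (8 * π)

lemma hasDerivAt_two_pi (x : ℝ) : HasDerivAt (fun y : ℝ => 2 * π * y) (2 * π) x := by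
  simpa using (hasDerivAt_id x).const_mul (2 * π)

lemma hasDerivAt_Pant (x t : ℝ) :
    HasDerivAt (Pant x) (rcAux t * rcAux (x - t)) t := by
  have h1 : HasDerivAt (fun y : ℝ => 2 * π * (x - y)) (2 * π * (0 - 1)) t :=
    ((hasDerivAt_const t x).sub (hasDerivAt_id t)).const_mul (2 * π)
  have h2 : HasDerivAt (fun y : ℝ => 2 * π * (2 * y - x)) (2 * π * (2 * 1 - 0)) t := by
    exact (((hasDerivAt_id t).const_mul 2).sub (hasDerivAt_const t x)).const_mul (2 * π)
  have h := (((((hasDerivAt_id t).add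
      (((hasDerivAt_two_pi t).sin).div_const (2 * π))).sub
      ((h1.sin).div_const (2 * π))).add
      (((hasDerivAt_id t).mul_const (Real.cos (2 * π * x))).div_const 2)).add
      ((h2.sin).div_const (8 * π)))
  refine h.congr_deriv ?_
  have hπ : (π:ℝ) ≠ 0 := Real.pi_ne_zero
  unfold rcAux
  rw [show 2 * π * (x - t) = 2 * π * x - 2 * π * t by ring,
    show 2 * π * (2 * t - x) = 2 * π * t - (2 * π * x - 2 * π * t) by ring]
  simp only [Real.cos_sub, Real.sin_sub]
  field_simp
  linear_combination (-8 * Real.cos (2*π*x)) * (Real.sin_sq_add_cos_sq (2*π*t))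

lemma raisedCosConv_eq (x : ℝ) (hx0 : 0 ≤ x) (hx1 : x ≤ 1) : raisedCosConv x = g1 x := by
  have hptw : ∀ t : ℝ, raisedCos t * raisedCos (x - t) =
      Set.indicator (Set.Icc (x - 1/2) (1/2)) (fun t => rcAux t * rcAux (x - t)) t := by
    intro t
    by_cases ht : t ∈ Set.Icc (x - 1/2) (1/2)
    · rw [Set.mem_Icc] at ht
      obtain ⟨ht1, ht2⟩ := ht
      rw [Set.indicator_of_mem (Set.mem_Icc.2 ⟨ht1, ht2⟩)]
      have e1 : |t| ≤ 1/2 := abs_le.2 ⟨by linarith, ht2⟩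
      have e2 : |x - t| ≤ 1/2 := abs_le.2 ⟨by linarith, by linarith⟩
      simp only [raisedCos, rcAux, if_pos e1, if_pos e2]
    · rw [Set.indicator_of_notMem ht]
      rw [Set.mem_Icc, not_and_or, not_le, not_le] at ht
      rcases ht with ht | ht
      · have : ¬ |x - t| ≤ 1/2 := by rw [not_le, lt_abs]; left; linarith
        simp only [raisedCos, if_neg this, mul_zero]
      · have : ¬ |t| ≤ 1/2 := by rw [not_le, lt_abs]; left; linarith
        simp only [raisedCos, if_neg this, zero_mul]
  have hab : x - 1/2 ≤ 1/2 := by linarith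
  have step1 : raisedCosConv x = ∫ t : ℝ, raisedCos t * raisedCos (x - t) := by
    unfold raisedCosConv
    rw [MeasureTheory.convolution_def]
    simp only [ContinuousLinearMap.lsmul_apply, smul_eq_mul]
  rw [step1]
  have step2 : (∫ t : ℝ, raisedCos t * raisedCos (x - t)) =
      ∫ t : ℝ, Set.indicator (Set.Icc (x - 1/2) (1/2)) (fun t => rcAux t * rcAux (x - t)) t := by
    exact MeasureTheory.integral_congr_ae (Filter.Eventually.of_forall hptw)
  rw [step2, MeasureTheory.integral_indicator measurableSet_Icc,
    MeasureTheory.integral_Icc_eq_integral_Ioc, ← intervalIntegral.integral_of_le hab]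
  have step3 : (∫ t in (x - 1/2)..(1/2), rcAux t * rcAux (x - t)) =
      Pant x (1/2) - Pant x (x - 1/2) := by
    apply intervalIntegral.integral_eq_sub_of_hasDerivAt
    · exact fun t _ => hasDerivAt_Pant x t
    · apply Continuous.intervalIntegrable
      unfold rcAux
      fun_prop
  rw [step3]
  unfold Pant g1
  have hπ : (π:ℝ) ≠ 0 := Real.pi_ne_zero
  rw [show 2 * π * ((1:ℝ)/2) = π by ring,
    show 2 * π * (x - 1/2) = 2 * π * x - π by ring,
    show 2 * π * (x - (x - 1/2)) = π by ring,
    show 2 * π * (2 * (1/2) - x) = 2 * π - 2 * π * x by ring,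
    show 2 * π * (2 * (x - 1/2) - x) = 2 * π * x - 2 * π by ring,
    Real.sin_sub, Real.sin_sub, Real.sin_sub]
  simp [Real.sin_two_pi, Real.cos_two_pi, Real.sin_pi, Real.cos_pi]
  field_simp
  ring

lemma raisedCosConv_zero_of_gt (x : ℝ) (hx : 1 < x) : raisedCosConv x = 0 := by
  have hptw : ∀ t : ℝ, raisedCos t * raisedCos (x - t) = 0 := by
    intro t
    by_cases ht : |t| ≤ 1/2
    · have h2 : ¬ |x - t| ≤ 1/2 := by
        rw [abs_le] at ht
        rw [not_le, lt_abs]; left; linarith [ht.1, ht.2]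
      simp only [raisedCos, if_neg h2, mul_zero]
    · simp only [raisedCos, if_neg ht, zero_mul]
  unfold raisedCosConv
  rw [MeasureTheory.convolution_def]
  simp only [ContinuousLinearMap.lsmul_apply, smul_eq_mul]
  rw [MeasureTheory.integral_congr_ae (Filter.Eventually.of_forall hptw)]
  simp

lemma raisedCosConv_even (x : ℝ) : raisedCosConv (-x) = raisedCosConv x := by
  unfold raisedCosConv
  apply MeasureTheory.convolution_neg_of_neg_eq <;>
  · apply Filter.Eventually.of_forall
    intro y
    simp [raisedCos, abs_neg, Real.cos_neg, mul_comm, mul_neg]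


noncomputable def g1d (x : ℝ) : ℝ :=
  -1 + Real.cos (2 * π * x) - π * (1 - x) * Real.sin (2 * π * x)

noncomputable def g1dd (x : ℝ) : ℝ :=
  -π * Real.sin (2 * π * x) - 2 * π ^ 2 * (1 - x) * Real.cos (2 * π * x)

noncomputable def Gfun (y : ℝ) : ℝ := if |y| ≤ 1 then g1 |y| else 0

noncomputable def D1fun (y : ℝ) : ℝ :=
  if |y| ≤ 1 then (if 0 ≤ y then g1d y else -g1d (-y)) else 0

noncomputable def D2fun (y : ℝ) : ℝ := if |y| ≤ 1 then g1dd |y| else 0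

/-- helper : monotonicity from derivative on `Icc 0 s`. -/
lemma nonneg_of_deriv {f f' : ℝ → ℝ} (hf : ∀ u, HasDerivAt f (f' u) u)
    (h0 : f 0 = 0) (hd : ∀ u, 0 ≤ u → 0 ≤ f' u) {t : ℝ} (ht : 0 ≤ t) : 0 ≤ f t := by
  have mono : MonotoneOn f (Set.Icc 0 t) := by
    apply monotoneOn_of_deriv_nonneg (convex_Icc 0 t)
    · exact fun u _ => (hf u).continuousAt.continuousWithinAt
    · exact fun u hu => ((hf u).differentiableAt).differentiableWithinAt
    · intro u hu
      rw [(hf u).deriv]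
      have : (0:ℝ) ≤ u := by
        rcases (interior_subset hu) with ⟨h1, h2⟩; exact h1
      exact hd u this
  have := mono (Set.left_mem_Icc.2 ht) (Set.right_mem_Icc.2 ht) ht
  rwa [h0] at this

lemma sin_ge_cubic {t : ℝ} (ht : 0 ≤ t) : t - t ^ 3 / 6 ≤ Real.sin t := by
  have h := nonneg_of_deriv (f := fun u => Real.sin u - (u - u ^ 3 / 6))
    (f' := fun u => Real.cos u - (1 - 3 * u ^ 2 / 6)) ?_ (by simp) ?_ ht
  · linarith
  · intro u
    have := (Real.hasDerivAt_sin u).sub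
      ((hasDerivAt_id u).sub (((hasDerivAt_id u).pow 3).div_const 6))
    exact this.congr_deriv (by simp only [id_eq]; push_cast; ring)
  · intro u _
    nlinarith [Real.one_sub_sq_div_two_le_cos (x := u)]

lemma cos_le_quartic (t : ℝ) : Real.cos t ≤ 1 - t ^ 2 / 2 + t ^ 4 / 24 := by
  have key : ∀ s : ℝ, 0 ≤ s → Real.cos s ≤ 1 - s ^ 2 / 2 + s ^ 4 / 24 := by
    intro s hs
    have h := nonneg_of_deriv (f := fun u => (1 - u ^ 2 / 2 + u ^ 4 / 24) - Real.cos u)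
      (f' := fun u => (-(2 * u) / 2 + 4 * u ^ 3 / 24) + Real.sin u) ?_ (by simp) ?_ hs
    · linarith
    · intro u
      have := (((hasDerivAt_const u (1:ℝ)).sub (((hasDerivAt_id u).pow 2).div_const 2)).add
        (((hasDerivAt_id u).pow 4).div_const 24)).sub (Real.hasDerivAt_cos u)
      exact this.congr_deriv (by simp only [id_eq]; push_cast; ring)
    · intro u hu
      have := sin_ge_cubic hu
      nlinarith
  rcases le_total 0 t with ht | ht
  · exact key t ht
  · have h2 := key (-t) (by linarith)
    rw [Real.cos_neg] at h2; ring_nf at h2 ⊢; linarith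

lemma sin_le_quintic {t : ℝ} (ht : 0 ≤ t) : Real.sin t ≤ t - t ^ 3 / 6 + t ^ 5 / 120 := by
  have h := nonneg_of_deriv (f := fun u => (u - u ^ 3 / 6 + u ^ 5 / 120) - Real.sin u)
    (f' := fun u => (1 - 3 * u ^ 2 / 6 + 5 * u ^ 4 / 120) - Real.cos u) ?_ (by simp) ?_ ht
  · linarith
  · intro u
    have := (((hasDerivAt_id u).sub (((hasDerivAt_id u).pow 3).div_const 6)).add
      (((hasDerivAt_id u).pow 5).div_const 120)).sub (Real.hasDerivAt_sin u)
    exact this.congr_deriv (by simp only [id_eq]; push_cast; ring)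
  · intro u hu
    have := cos_le_quartic u
    nlinarith

lemma hasDerivAt_g1 (x : ℝ) : HasDerivAt g1 (g1d x) x := by
  have h := (((hasDerivAt_const x (1:ℝ)).sub (hasDerivAt_id x)).mul
      ((hasDerivAt_const x (1:ℝ)).add (((hasDerivAt_two_pi x).cos).div_const 2))).add
      (((hasDerivAt_two_pi x).sin).const_mul (3 / (4 * π)))
  refine h.congr_deriv ?_
  unfold g1d
  simp only [Pi.sub_apply, Pi.add_apply, id_eq]
  have hπ : (π:ℝ) ≠ 0 := Real.pi_ne_zero
  field_simp
  ring

lemma hasDerivAt_g1d (x : ℝ) : HasDerivAt g1d (g1dd x) x := by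
  have h := (((hasDerivAt_const x (-1:ℝ)).add ((hasDerivAt_two_pi x).cos)).sub
      ((((hasDerivAt_const x π).mul ((hasDerivAt_const x (1:ℝ)).sub (hasDerivAt_id x)))).mul
        ((hasDerivAt_two_pi x).sin)))
  refine h.congr_deriv ?_
  unfold g1dd
  simp only [Pi.mul_apply, Pi.sub_apply, Pi.add_apply, id_eq]
  ring

lemma g1_one : g1 1 = 0 := by
  simp [g1, mul_one, Real.sin_two_pi]
lemma g1d_one : g1d 1 = 0 := by
  simp [g1d, mul_one, Real.sin_two_pi, Real.cos_two_pi]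
lemma g1d_zero : g1d 0 = 0 := by simp [g1d]
lemma g1dd_one : g1dd 1 = 0 := by
  simp [g1dd, mul_one, Real.sin_two_pi, Real.cos_two_pi]

/-- Gluing a derivative from left and right formulas. -/
lemma glue_deriv {f fl fr : ℝ → ℝ} {a d : ℝ}
    (hl : ∀ᶠ z in nhdsWithin a (Set.Iic a), f z = fl z)
    (hr : ∀ᶠ z in nhdsWithin a (Set.Ici a), f z = fr z)
    (hfa_l : f a = fl a) (hfa_r : f a = fr a)
    (hdl : HasDerivAt fl d a) (hdr : HasDerivAt fr d a) : HasDerivAt f d a := by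
  have h1 : HasDerivWithinAt f d (Set.Iic a) a :=
    (hdl.hasDerivWithinAt).congr_of_eventuallyEq hl hfa_l
  have h2 : HasDerivWithinAt f d (Set.Ici a) a :=
    (hdr.hasDerivWithinAt).congr_of_eventuallyEq hr hfa_r
  have h3 := h1.union h2
  rw [Set.Iic_union_Ici] at h3
  exact hasDerivWithinAt_univ.mp h3

lemma Gfun_eq_on_pos {z : ℝ} (h0 : 0 ≤ z) (h1 : z ≤ 1) : Gfun z = g1 z := by
  unfold Gfun; rw [abs_of_nonneg h0, if_pos h1]
lemma Gfun_eq_on_neg {z : ℝ} (h0 : z ≤ 0) (h1 : -1 ≤ z) : Gfun z = g1 (-z) := by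
  unfold Gfun; rw [abs_of_nonpos h0, if_pos (by linarith)]
lemma Gfun_eq_zero {z : ℝ} (h : 1 < |z|) : Gfun z = 0 := by
  unfold Gfun; rw [if_neg (not_le.2 h)]

lemma D1fun_eq_on_pos {z : ℝ} (h0 : 0 ≤ z) (h1 : z ≤ 1) : D1fun z = g1d z := by
  unfold D1fun; rw [if_pos (by rw [abs_of_nonneg h0]; exact h1), if_pos h0]
lemma D1fun_eq_on_neg {z : ℝ} (h0 : z < 0) (h1 : -1 ≤ z) : D1fun z = -g1d (-z) := by
  unfold D1fun
  rw [if_pos (by rw [abs_of_nonpos h0.le]; linarith), if_neg (not_le.2 h0)]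
lemma D1fun_eq_zero {z : ℝ} (h : 1 < |z|) : D1fun z = 0 := by
  unfold D1fun; rw [if_neg (not_le.2 h)]

lemma mem_right (a b : ℝ) (h : a < b) : Set.Ioi a ∈ nhdsWithin b (Set.Iic b) :=
  mem_nhdsWithin_of_mem_nhds (Ioi_mem_nhds h)
lemma mem_left (a b : ℝ) (h : b < a) : Set.Iio a ∈ nhdsWithin b (Set.Ici b) :=
  mem_nhdsWithin_of_mem_nhds (Iio_mem_nhds h)

lemma hasDerivAt_negfun (y : ℝ) : HasDerivAt (fun z : ℝ => -z) (-1) y := by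
  exact (hasDerivAt_id y).neg

lemma hasDerivAt_g1_neg (y : ℝ) : HasDerivAt (fun z : ℝ => g1 (-z)) (-g1d (-y)) y := by
  have := (hasDerivAt_g1 (-y)).comp y (hasDerivAt_negfun y)
  exact this.congr_deriv (by ring)

lemma hasDerivAt_negg1d_neg (y : ℝ) :
    HasDerivAt (fun z : ℝ => -g1d (-z)) (g1dd (-y)) y := by
  have := ((hasDerivAt_g1d (-y)).comp y (hasDerivAt_negfun y)).neg
  exact this.congr_deriv (by ring)

lemma hasDerivAt_Gfun (y : ℝ) : HasDerivAt Gfun (D1fun y) y := by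
  rcases lt_trichotomy y 0 with hy | hy | hy
  · rcases lt_trichotomy y (-1) with hy1 | hy1 | hy1
    · -- y < -1
      rw [D1fun_eq_zero (by rw [abs_of_neg hy]; linarith)]
      have hev : Gfun =ᶠ[nhds y] (fun _ => (0:ℝ)) := by
        filter_upwards [Iio_mem_nhds hy1] with z hz
        exact Gfun_eq_zero (by rw [abs_of_neg (by simp at hz; linarith)]; simp at hz; linarith)
      exact (hasDerivAt_const y 0).congr_of_eventuallyEq hev
    · -- y = -1
      subst hy1
      rw [D1fun_eq_on_neg (by norm_num) le_rfl]
      have hval : Gfun (-1) = 0 := by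
        rw [Gfun_eq_on_neg (by norm_num) le_rfl]; simpa using g1_one
      have hd : -g1d (-(-1)) = 0 := by simpa using g1d_one
      rw [hd]
      apply glue_deriv (fl := fun _ => (0:ℝ)) (fr := fun z => g1 (-z))
      · filter_upwards [self_mem_nhdsWithin] with z hz
        rcases eq_or_lt_of_le (show z ≤ -1 from hz) with h | h
        · rw [h, Gfun_eq_on_neg (by norm_num) le_rfl]; simpa using g1_one
        · exact Gfun_eq_zero (by rw [abs_of_neg (by linarith)]; linarith)
      · filter_upwards [mem_nhdsWithin_of_mem_nhds (Iio_mem_nhds (by norm_num : (-1:ℝ) < 0)),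
          self_mem_nhdsWithin] with z hz1 hz2
        exact Gfun_eq_on_neg (le_of_lt hz1) hz2
      · exact hval
      · exact Gfun_eq_on_neg (by norm_num) le_rfl
      · exact hasDerivAt_const _ 0
      · have h := hasDerivAt_g1_neg (-1)
        rwa [show -(-1:ℝ) = 1 by norm_num, g1d_one, neg_zero] at h
    · -- -1 < y < 0
      rw [D1fun_eq_on_neg hy (by linarith)]
      have hev : Gfun =ᶠ[nhds y] (fun z => g1 (-z)) := by
        filter_upwards [isOpen_Ioo.mem_nhds (show y ∈ Set.Ioo (-1:ℝ) 0 from ⟨hy1, hy⟩)] with z hz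
        exact Gfun_eq_on_neg hz.2.le hz.1.le
      exact (hasDerivAt_g1_neg y).congr_of_eventuallyEq hev
  · -- y = 0
    subst hy
    rw [D1fun_eq_on_pos le_rfl zero_le_one]
    rw [g1d_zero]
    apply glue_deriv (fl := fun z => g1 (-z)) (fr := g1)
    · filter_upwards [mem_nhdsWithin_of_mem_nhds (Ioi_mem_nhds (by norm_num : (-1:ℝ) < 0)),
        self_mem_nhdsWithin] with z hz1 hz2
      exact Gfun_eq_on_neg hz2 hz1.le
    · filter_upwards [mem_nhdsWithin_of_mem_nhds (Iio_mem_nhds zero_lt_one),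
        self_mem_nhdsWithin] with z hz1 hz2
      exact Gfun_eq_on_pos hz2 hz1.le
    · exact Gfun_eq_on_neg le_rfl (by norm_num)
    · exact Gfun_eq_on_pos le_rfl zero_le_one
    · have := hasDerivAt_g1_neg 0
      simpa [g1d_zero] using this
    · simpa [g1d_zero] using hasDerivAt_g1 0
  · rcases lt_trichotomy y 1 with hy1 | hy1 | hy1
    · -- 0 < y < 1
      rw [D1fun_eq_on_pos hy.le hy1.le]
      have hev : Gfun =ᶠ[nhds y] g1 := by
        filter_upwards [isOpen_Ioo.mem_nhds (show y ∈ Set.Ioo (0:ℝ) 1 from ⟨hy, hy1⟩)] with z hz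
        exact Gfun_eq_on_pos hz.1.le hz.2.le
      exact (hasDerivAt_g1 y).congr_of_eventuallyEq hev
    · -- y = 1
      subst hy1
      rw [D1fun_eq_on_pos zero_le_one le_rfl, g1d_one]
      apply glue_deriv (fl := g1) (fr := fun _ => (0:ℝ))
      · filter_upwards [mem_nhdsWithin_of_mem_nhds (Ioi_mem_nhds zero_lt_one),
          self_mem_nhdsWithin] with z hz1 hz2
        exact Gfun_eq_on_pos (le_of_lt hz1) hz2
      · filter_upwards [self_mem_nhdsWithin] with z hz
        rcases eq_or_lt_of_le (show (1:ℝ) ≤ z from hz) with h | h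
        · rw [← h, Gfun_eq_on_pos zero_le_one le_rfl]; exact g1_one
        · exact Gfun_eq_zero (by rw [abs_of_pos (by linarith)]; exact h)
      · exact Gfun_eq_on_pos zero_le_one le_rfl
      · rw [Gfun_eq_on_pos zero_le_one le_rfl]; exact g1_one
      · have h := hasDerivAt_g1 1
        rwa [g1d_one] at h
      · exact hasDerivAt_const _ 0
    · -- 1 < y
      rw [D1fun_eq_zero (by rw [abs_of_pos hy]; exact hy1)]
      have hev : Gfun =ᶠ[nhds y] (fun _ => (0:ℝ)) := by
        filter_upwards [Ioi_mem_nhds hy1] with z hz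
        exact Gfun_eq_zero (by rw [abs_of_pos (lt_trans zero_lt_one hz)]; exact hz)
      exact (hasDerivAt_const y 0).congr_of_eventuallyEq hev

lemma D2fun_eq_on_pos {z : ℝ} (h0 : 0 ≤ z) (h1 : z ≤ 1) : D2fun z = g1dd z := by
  unfold D2fun; rw [abs_of_nonneg h0, if_pos h1]
lemma D2fun_eq_on_neg {z : ℝ} (h0 : z ≤ 0) (h1 : -1 ≤ z) : D2fun z = g1dd (-z) := by
  unfold D2fun; rw [abs_of_nonpos h0, if_pos (by linarith)]
lemma D2fun_eq_zero {z : ℝ} (h : 1 < |z|) : D2fun z = 0 := by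
  unfold D2fun; rw [if_neg (not_le.2 h)]

lemma hasDerivAt_D1fun (y : ℝ) : HasDerivAt D1fun (D2fun y) y := by
  rcases lt_trichotomy y 0 with hy | hy | hy
  · rcases lt_trichotomy y (-1) with hy1 | hy1 | hy1
    · rw [D2fun_eq_zero (by rw [abs_of_neg hy]; linarith)]
      have hev : D1fun =ᶠ[nhds y] (fun _ => (0:ℝ)) := by
        filter_upwards [Iio_mem_nhds hy1] with z hz
        exact D1fun_eq_zero (by rw [abs_of_neg (by simp at hz; linarith)]; simp at hz; linarith)
      exact (hasDerivAt_const y 0).congr_of_eventuallyEq hev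
    · subst hy1
      rw [D2fun_eq_on_neg (by norm_num) le_rfl,
        show -(-1:ℝ) = 1 by norm_num, g1dd_one]
      apply glue_deriv (fl := fun _ => (0:ℝ)) (fr := fun z => -g1d (-z))
      · filter_upwards [self_mem_nhdsWithin] with z hz
        rcases eq_or_lt_of_le (show z ≤ -1 from hz) with h | h
        · rw [h, D1fun_eq_on_neg (by norm_num) le_rfl,
            show -(-1:ℝ) = 1 by norm_num, g1d_one, neg_zero]
        · exact D1fun_eq_zero (by rw [abs_of_neg (by linarith)]; linarith)
      · filter_upwards [mem_nhdsWithin_of_mem_nhds (Iio_mem_nhds (by norm_num : (-1:ℝ) < 0)),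
          self_mem_nhdsWithin] with z hz1 hz2
        exact D1fun_eq_on_neg hz1 hz2
      · rw [D1fun_eq_on_neg (by norm_num) le_rfl,
          show -(-1:ℝ) = 1 by norm_num, g1d_one, neg_zero]
      · exact D1fun_eq_on_neg (by norm_num) le_rfl
      · exact hasDerivAt_const _ 0
      · have h := hasDerivAt_negg1d_neg (-1)
        rwa [show -(-1:ℝ) = 1 by norm_num, g1dd_one] at h
    · rw [D2fun_eq_on_neg hy.le (by linarith)]
      have hev : D1fun =ᶠ[nhds y] (fun z => -g1d (-z)) := by
        filter_upwards [isOpen_Ioo.mem_nhds (show y ∈ Set.Ioo (-1:ℝ) 0 from ⟨hy1, hy⟩)] with z hz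
        exact D1fun_eq_on_neg hz.2 hz.1.le
      exact (hasDerivAt_negg1d_neg y).congr_of_eventuallyEq hev
  · subst hy
    rw [D2fun_eq_on_pos le_rfl zero_le_one]
    apply glue_deriv (fl := fun z => -g1d (-z)) (fr := g1d)
    · filter_upwards [mem_nhdsWithin_of_mem_nhds (Ioi_mem_nhds (by norm_num : (-1:ℝ) < 0)),
        self_mem_nhdsWithin] with z hz1 hz2
      rcases eq_or_lt_of_le (show z ≤ 0 from hz2) with h | h
      · rw [h, D1fun_eq_on_pos le_rfl zero_le_one, g1d_zero, neg_zero, g1d_zero, neg_zero]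
      · exact D1fun_eq_on_neg h hz1.le
    · filter_upwards [mem_nhdsWithin_of_mem_nhds (Iio_mem_nhds zero_lt_one),
        self_mem_nhdsWithin] with z hz1 hz2
      exact D1fun_eq_on_pos hz2 hz1.le
    · rw [D1fun_eq_on_pos le_rfl zero_le_one, g1d_zero, neg_zero, g1d_zero, neg_zero]
    · exact D1fun_eq_on_pos le_rfl zero_le_one
    · have h := hasDerivAt_negg1d_neg 0
      rwa [neg_zero] at h
    · exact hasDerivAt_g1d 0
  · rcases lt_trichotomy y 1 with hy1 | hy1 | hy1
    · rw [D2fun_eq_on_pos hy.le hy1.le]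
      have hev : D1fun =ᶠ[nhds y] g1d := by
        filter_upwards [isOpen_Ioo.mem_nhds (show y ∈ Set.Ioo (0:ℝ) 1 from ⟨hy, hy1⟩)] with z hz
        exact D1fun_eq_on_pos hz.1.le hz.2.le
      exact (hasDerivAt_g1d y).congr_of_eventuallyEq hev
    · subst hy1
      rw [D2fun_eq_on_pos zero_le_one le_rfl, g1dd_one]
      apply glue_deriv (fl := g1d) (fr := fun _ => (0:ℝ))
      · filter_upwards [mem_nhdsWithin_of_mem_nhds (Ioi_mem_nhds zero_lt_one),
          self_mem_nhdsWithin] with z hz1 hz2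
        exact D1fun_eq_on_pos (le_of_lt hz1) hz2
      · filter_upwards [self_mem_nhdsWithin] with z hz
        rcases eq_or_lt_of_le (show (1:ℝ) ≤ z from hz) with h | h
        · rw [← h, D1fun_eq_on_pos zero_le_one le_rfl]; exact g1d_one
        · exact D1fun_eq_zero (by rw [abs_of_pos (by linarith)]; exact h)
      · exact D1fun_eq_on_pos zero_le_one le_rfl
      · rw [D1fun_eq_on_pos zero_le_one le_rfl]; exact g1d_one
      · have h := hasDerivAt_g1d 1
        rwa [g1dd_one] at h
      · exact hasDerivAt_const _ 0
    · rw [D2fun_eq_zero (by rw [abs_of_pos hy]; exact hy1)]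
      have hev : D1fun =ᶠ[nhds y] (fun _ => (0:ℝ)) := by
        filter_upwards [Ioi_mem_nhds hy1] with z hz
        exact D1fun_eq_zero (by rw [abs_of_pos (lt_trans zero_lt_one hz)]; exact hz)
      exact (hasDerivAt_const y 0).congr_of_eventuallyEq hev

lemma pi_sq_bounds : (9.85:ℝ) ≤ π^2 ∧ π^2 ≤ (9.93:ℝ) := by
  have hπ : 0 < π := Real.pi_pos
  have hπl : 3.14 < π := Real.pi_gt_d2
  have hπu : π < 3.15 := Real.pi_lt_d2
  constructor
  · nlinarith [mul_le_mul hπl.le hπl.le (by norm_num : (0:ℝ) ≤ 3.14) hπ.le]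
  · nlinarith [mul_le_mul hπu.le hπu.le hπ.le (by norm_num : (0:ℝ) ≤ 3.15)]

lemma pi_coef_bound : 3 * π ^ 2 ≤ 4 * π ^ 4 - π ^ 6 / 3 := by
  obtain ⟨h2l, h2u⟩ := pi_sq_bounds
  have hsq : (0:ℝ) ≤ π^2 := sq_nonneg π
  have h4l : (97:ℝ) ≤ π^4 := by
    nlinarith [mul_le_mul h2l h2l (by norm_num : (0:ℝ) ≤ 9.85) hsq]
  have h4u : π^4 ≤ (98.7:ℝ) := by
    nlinarith [mul_le_mul h2u h2u hsq (by norm_num : (0:ℝ) ≤ 9.93)]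
  have h6u : π^6 ≤ (981:ℝ) := by
    nlinarith [mul_le_mul h4u h2u hsq (by norm_num : (0:ℝ) ≤ 98.7)]
  linarith

lemma B_nonneg {y : ℝ} (hy : 0 ≤ y) : 0 ≤ 4 * π ^ 2 * y - 2 * π * Real.sin (2 * π * y) := by
  have hπ : 0 < π := Real.pi_pos
  rcases eq_or_lt_of_le hy with h | h
  · simp [← h]
  · have h2 : Real.sin (2 * π * y) < 2 * π * y := Real.sin_lt (by positivity)
    nlinarith

lemma A_ge {y : ℝ} (hy0 : 0 ≤ y) (hy1 : y ≤ 1) :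
    3 * π ^ 2 * y ^ 2 ≤
      2 * π ^ 2 + 4 * π ^ 2 * y - 2 * π ^ 2 * (1 - y) * Real.cos (2 * π * y)
        - 3 * π * Real.sin (2 * π * y) := by
  have hπ : 0 < π := Real.pi_pos
  have hπl : 3.14 < π := Real.pi_gt_d2
  have hπu : π < 3.15 := Real.pi_lt_d2
  rcases le_total y (1/2) with hhalf | hhalf
  · have hc := cos_le_quartic (2 * π * y)
    have hs := sin_le_quintic (t := 2 * π * y) (by positivity)
    have e1 : 0 ≤ 2 * π ^ 2 * (1 - y) *
        ((1 - (2*π*y) ^ 2 / 2 + (2*π*y) ^ 4 / 24) - Real.cos (2 * π * y)) := by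
      apply mul_nonneg (by nlinarith) (by linarith)
    have e2 : 0 ≤ 3 * π *
        (((2*π*y) - (2*π*y) ^ 3 / 6 + (2*π*y) ^ 5 / 120) - Real.sin (2 * π * y)) := by
      apply mul_nonneg (by positivity) (by linarith)
    -- the polynomial lower bound
    have key : 3 * π ^ 2 * y ^ 2 ≤
        2 * π ^ 2 + 4 * π ^ 2 * y - 2 * π ^ 2 * (1 - y) * (1 - (2*π*y) ^ 2 / 2 + (2*π*y) ^ 4 / 24)
          - 3 * π * ((2*π*y) - (2*π*y) ^ 3 / 6 + (2*π*y) ^ 5 / 120) := by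
      have expand : 2 * π ^ 2 + 4 * π ^ 2 * y
          - 2 * π ^ 2 * (1 - y) * (1 - (2*π*y) ^ 2 / 2 + (2*π*y) ^ 4 / 24)
          - 3 * π * ((2*π*y) - (2*π*y) ^ 3 / 6 + (2*π*y) ^ 5 / 120)
          = 4 * π ^ 4 * y ^ 2 - (4 * π ^ 6 / 3) * y ^ 4 + (8 * π ^ 6 / 15) * y ^ 5 := by
        ring
      rw [expand]
      have hy2 : y ^ 2 ≤ 1/4 := by nlinarith
      have h5 : 0 ≤ (8 * π ^ 6 / 15) * y ^ 5 := by positivity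
      have h4 : (4 * π ^ 6 / 3) * y ^ 4 ≤ (π ^ 6 / 3) * y ^ 2 := by
        nlinarith [mul_le_mul_of_nonneg_left hy2 (show (0:ℝ) ≤ 4*π^6/3*y^2 by positivity)]
      have hfin := mul_le_mul_of_nonneg_right pi_coef_bound (sq_nonneg y)
      nlinarith [hfin, h4, h5]
    linarith
  · have hc : Real.cos (2 * π * y) ≤ 1 := Real.cos_le_one _
    have hs : Real.sin (2 * π * y) ≤ 0 := by
      have : Real.sin (2 * π * y) = Real.sin (2 * π * y - 2 * π) := (Real.sin_sub_two_pi _).symm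
      rw [this]
      apply Real.sin_nonpos_of_nonpos_of_neg_pi_le <;> nlinarith
    have e1 : 0 ≤ 2 * π ^ 2 * (1 - y) * (1 - Real.cos (2 * π * y)) := by
      apply mul_nonneg (by nlinarith) (by linarith)
    have e2 : 0 ≤ 3 * π * (-Real.sin (2 * π * y)) := by
      apply mul_nonneg (by positivity) (by linarith)
    have e3 : 0 ≤ π ^ 2 * (y * (1 - y)) := by
      apply mul_nonneg (by positivity) (mul_nonneg hy0 (by linarith))
    have e4 : 0 ≤ π ^ 2 * y := by positivity
    nlinarith [e1, e2, e3, e4]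


lemma conv_eq_G : raisedCosConv = Gfun := by
  funext y
  rcases le_or_gt (|y|) 1 with h | h
  · have h0 : 0 ≤ |y| := abs_nonneg y
    have hconv_abs : raisedCosConv y = raisedCosConv |y| := by
      rcases le_or_gt 0 y with hy | hy
      · rw [abs_of_nonneg hy]
      · rw [abs_of_neg hy]
        simpa using raisedCosConv_even (-y)
    rw [hconv_abs, raisedCosConv_eq _ h0 h]
    unfold Gfun
    rw [if_pos h]
  · have hconv_abs : raisedCosConv y = raisedCosConv |y| := by
      rcases le_or_gt 0 y with hy | hy
      · rw [abs_of_nonneg hy]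
      · rw [abs_of_neg hy]
        simpa using raisedCosConv_even (-y)
    rw [hconv_abs, raisedCosConv_zero_of_gt _ h]
    unfold Gfun
    rw [if_neg (not_le.2 h)]

lemma deriv_conv_eq : deriv raisedCosConv = D1fun := by
  funext y
  rw [conv_eq_G]
  exact (hasDerivAt_Gfun y).deriv

lemma deriv2_conv_eq : deriv (deriv raisedCosConv) = D2fun := by
  rw [deriv_conv_eq]
  funext y
  exact (hasDerivAt_D1fun y).deriv

lemma g1_zero : g1 0 = 3/2 := by norm_num [g1]
lemma g1dd_zero : g1dd 0 = -2 * π ^ 2 := by simp [g1dd]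

lemma Gfun_zero : Gfun 0 = 3/2 := by
  unfold Gfun
  rw [abs_zero, if_pos zero_le_one]
  exact g1_zero

lemma D2fun_zero : D2fun 0 = -2 * π ^ 2 := by
  unfold D2fun
  rw [abs_zero, if_pos zero_le_one]
  exact g1dd_zero

lemma psiAdm_formula (τ x : ℝ) :
    psiAdm τ x = (Real.sqrt (1 + τ))⁻¹ *
      (4 * π ^ 2 * (1 + τ) * Gfun (x / Real.sqrt (1 + τ)) +
        D2fun (x / Real.sqrt (1 + τ))) := by
  unfold psiAdm
  rw [deriv2_conv_eq, conv_eq_G]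

/-- There is an absolute constant `c > 0` such that for every `τ > 0` and every
`x` with `|x| ≤ √(1+τ)` one has `ψ_τ(0) − ψ_τ(x) ≥ c·τ·(1+τ)^{−3/2}·x²`. In particular `0` is the
global maximum of `ψ_τ`. -/
theorem psiAdm_quadratic_decay :
    (∃ c : ℝ, 0 < c ∧ ∀ τ : ℝ, 0 < τ → ∀ x : ℝ, |x| ≤ Real.sqrt (1 + τ) →
      c * τ * (1 + τ) ^ (-(3/2 : ℝ)) * x ^ 2 ≤ psiAdm τ 0 - psiAdm τ x) ∧
    (∀ τ : ℝ, 0 < τ → ∀ x : ℝ, psiAdm τ x ≤ psiAdm τ 0) := by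
  have hπ : 0 < π := Real.pi_pos
  have key : ∀ τ : ℝ, 0 < τ → ∀ x : ℝ, |x| ≤ Real.sqrt (1 + τ) →
      3 * π ^ 2 * τ * (1 + τ) ^ (-(3/2 : ℝ)) * x ^ 2 ≤ psiAdm τ 0 - psiAdm τ x := by
    intro τ hτ x hx
    set s := Real.sqrt (1 + τ) with hs_def
    have hτ1 : (0:ℝ) < 1 + τ := by linarith
    have hs : 0 < s := Real.sqrt_pos.2 hτ1
    have hs2 : s ^ 2 = 1 + τ := Real.sq_sqrt hτ1.le
    set y := |x| / s with hy_def
    have hy0 : 0 ≤ y := div_nonneg (abs_nonneg x) hs.le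
    have hy1 : y ≤ 1 := by rw [hy_def]; exact (div_le_one hs).2 hx
    have habs : |x / s| = y := by rw [abs_div, abs_of_pos hs]
    have hG : Gfun (x / s) = g1 y := by unfold Gfun; rw [habs, if_pos hy1]
    have hD : D2fun (x / s) = g1dd y := by unfold D2fun; rw [habs, if_pos hy1]
    have hG0 : Gfun ((0:ℝ) / s) = 3/2 := by rw [zero_div]; exact Gfun_zero
    have hD0 : D2fun ((0:ℝ) / s) = -2 * π ^ 2 := by rw [zero_div]; exact D2fun_zero
    rw [psiAdm_formula, psiAdm_formula, ← hs_def, hG, hD, hG0, hD0]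
    have hdiff : s⁻¹ * (4 * π ^ 2 * (1 + τ) * (3/2) + -2 * π ^ 2) -
        s⁻¹ * (4 * π ^ 2 * (1 + τ) * g1 y + g1dd y) =
        s⁻¹ * (τ * (2 * π ^ 2 + 4 * π ^ 2 * y - 2 * π ^ 2 * (1 - y) * Real.cos (2 * π * y)
            - 3 * π * Real.sin (2 * π * y))
          + (4 * π ^ 2 * y - 2 * π * Real.sin (2 * π * y))) := by
      unfold g1 g1dd
      have hπ' : (π:ℝ) ≠ 0 := Real.pi_ne_zero
      field_simp
      ring
    rw [hdiff]
    have hA := A_ge hy0 hy1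
    have hB := B_nonneg hy0
    have hsum : τ * (3 * π ^ 2 * y ^ 2) ≤
        τ * (2 * π ^ 2 + 4 * π ^ 2 * y - 2 * π ^ 2 * (1 - y) * Real.cos (2 * π * y)
            - 3 * π * Real.sin (2 * π * y))
          + (4 * π ^ 2 * y - 2 * π * Real.sin (2 * π * y)) := by
      have := mul_le_mul_of_nonneg_left hA hτ.le
      linarith
    have hmul := mul_le_mul_of_nonneg_left hsum (inv_nonneg.2 hs.le)
    refine le_trans (le_of_eq ?_) hmul
    -- 3π²τ(1+τ)^{-3/2} x² = s⁻¹ (τ · 3π² y²)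
    have hrpow : (1 + τ) ^ (-(3/2 : ℝ)) = (s ^ 3)⁻¹ := by
      rw [Real.rpow_neg hτ1.le]
      congr 1
      have h1 : (1 + τ) ^ ((3:ℝ)/2) = ((1 + τ) ^ ((1:ℝ)/2)) ^ (3:ℕ) := by
        rw [← Real.rpow_natCast ((1 + τ) ^ ((1:ℝ)/2)) 3, ← Real.rpow_mul hτ1.le]
        norm_num
      rw [h1, ← Real.sqrt_eq_rpow]
    rw [hrpow]
    have hy2 : y ^ 2 = x ^ 2 / s ^ 2 := by
      rw [hy_def, div_pow, sq_abs]
    rw [hy2]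
    field_simp
  refine ⟨⟨3 * π ^ 2, by positivity, key⟩, ?_⟩
  intro τ hτ x
  set s := Real.sqrt (1 + τ) with hs_def
  have hτ1 : (0:ℝ) < 1 + τ := by linarith
  have hs : 0 < s := Real.sqrt_pos.2 hτ1
  rcases le_or_gt (|x|) s with hx | hx
  · have h := key τ hτ x hx
    have hpos : 0 ≤ 3 * π ^ 2 * τ * (1 + τ) ^ (-(3/2 : ℝ)) * x ^ 2 := by positivity
    linarith
  · have habs : 1 < |x / s| := by
      rw [abs_div, abs_of_pos hs]
      exact (one_lt_div hs).2 hx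
    have hG : Gfun (x / s) = 0 := Gfun_eq_zero habs
    have hD : D2fun (x / s) = 0 := D2fun_eq_zero habs
    have hx0 : psiAdm τ x = 0 := by
      rw [psiAdm_formula, ← hs_def, hG, hD]
      ring
    have h00 : psiAdm τ 0 = s⁻¹ * (4 * π ^ 2 * (1 + τ) * (3/2) + -2 * π ^ 2) := by
      rw [psiAdm_formula, ← hs_def, zero_div, Gfun_zero, D2fun_zero]
    rw [hx0, h00]
    apply mul_nonneg (inv_nonneg.2 hs.le)
    nlinarith [sq_nonneg π]
end
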